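/- Every limit group (finitely generated fully residually free group) embeds into SL₂(R*) for some ultrapower R* of the real field; in particular, every limit group admits a nontrivial 2-dimensional linear representation over some field. -/

import Mathlib

open Matrix Filter Function Set
open scoped Pointwise

noncomputable section SanovAux

private abbrev SL2R := Matrix.SpecialLinearGroup (Fin 2) ℝ

/-- Nonzero vectors in the plane. -/
private def PV : Type := {v : Fin 2 → ℝ // v ≠ 0}

private instance : MulAction SL2R PV where
  smul g v := ⟨(g : Matrix (Fin 2) (Fin 2) ℝ).mulVec v.1, by
    intro h
    apply v.2
    have h2 := congrArg (Matrix.mulVec ((g⁻¹ : SL2R) : Matrix (Fin 2) (Fin 2) ℝ)) h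
    rwa [Matrix.mulVec_mulVec, ← Matrix.SpecialLinearGroup.coe_mul, inv_mul_cancel,
      Matrix.SpecialLinearGroup.coe_one, Matrix.one_mulVec, Matrix.mulVec_zero] at h2⟩
  one_smul v := Subtype.ext (by
    show ((1 : SL2R) : Matrix (Fin 2) (Fin 2) ℝ).mulVec v.1 = v.1
    rw [Matrix.SpecialLinearGroup.coe_one, Matrix.one_mulVec])
  mul_smul g h v := Subtype.ext (by
    show (((g * h) : SL2R) : Matrix (Fin 2) (Fin 2) ℝ).mulVec v.1 =
      (g : Matrix (Fin 2) (Fin 2) ℝ).mulVec ((h : Matrix (Fin 2) (Fin 2) ℝ).mulVec v.1)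
    rw [Matrix.mulVec_mulVec, Matrix.SpecialLinearGroup.coe_mul])

private lemma PV.smul_coe (g : SL2R) (v : PV) :
    (g • v).1 = (g : Matrix (Fin 2) (Fin 2) ℝ).mulVec v.1 := rfl

private def pgen (n : ℕ) : SL2R :=
  ⟨!![1 - 5*(n:ℝ), 5*(n:ℝ)^2; -5, 1 + 5*(n:ℝ)], by
    rw [Matrix.det_fin_two_of]; ring⟩

private def pgen' (n : ℕ) : SL2R :=
  ⟨!![1 + 5*(n:ℝ), -(5*(n:ℝ)^2); 5, 1 - 5*(n:ℝ)], by
    rw [Matrix.det_fin_two_of]; ring⟩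

private lemma pgen_inv (n : ℕ) : (pgen n)⁻¹ = pgen' n := by
  apply inv_eq_of_mul_eq_one_right
  apply Subtype.ext
  show ((pgen n : Matrix (Fin 2) (Fin 2) ℝ) * (pgen' n : Matrix (Fin 2) (Fin 2) ℝ)) = 1
  ext i j
  fin_cases i <;> fin_cases j <;>
    simp [pgen, pgen', Matrix.mul_apply, Fin.sum_univ_two, Matrix.one_apply] <;> ring

private def pX (n : ℕ) : Set PV :=
  {v | -(v.1 1)^2 < 2*((v.1 0 - (n:ℝ)*v.1 1)*(v.1 1)) ∧ (v.1 0 - (n:ℝ)*v.1 1)*(v.1 1) ≤ 0}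

private def pY (n : ℕ) : Set PV :=
  {v | 0 < (v.1 0 - (n:ℝ)*v.1 1)*(v.1 1) ∧ 2*((v.1 0 - (n:ℝ)*v.1 1)*(v.1 1)) < (v.1 1)^2}

private lemma PV.nz (v : PV) (n : ℝ) : ¬(v.1 0 - n * v.1 1 = 0 ∧ v.1 1 = 0) := by
  rintro ⟨h1, h2⟩
  apply v.2
  funext i
  fin_cases i
  · show v.1 0 = 0
    rw [h2] at h1; linarith [h1]
  · exact h2

private lemma pkey1 (u y : ℝ) (hne : ¬(u = 0 ∧ y = 0))
    (h : ¬(0 < u*y ∧ 2*(u*y) < y^2)) :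
    -(y - 5*u)^2 < 2*(u*(y - 5*u)) ∧ u*(y - 5*u) ≤ 0 := by
  rcases eq_or_ne u 0 with hu | hu
  · subst hu
    have hy : y ≠ 0 := fun hy => hne ⟨rfl, hy⟩
    have : 0 < y^2 := by positivity
    constructor <;> nlinarith
  · have hu2 : 0 < u^2 := by positivity
    rcases le_or_gt (u*y) 0 with hle | hpos
    · constructor
      · nlinarith [sq_nonneg y]
      · nlinarith
    · have h2 : y^2 ≤ 2*(u*y) := by
        by_contra hc; push_neg at hc; exact h ⟨hpos, hc⟩
      have huy : u*y ≤ 2*u^2 := by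
        nlinarith [mul_le_mul_of_nonneg_left h2 (sq_nonneg u), sq_nonneg (u*y)]
      have e1 : 0 < 3*u^2 - u*y := by nlinarith
      have e2 : 0 < 5*u^2 - u*y := by nlinarith
      constructor
      · nlinarith [mul_pos e1 e2]
      · nlinarith

private lemma pkey2 (u y : ℝ) (hne : ¬(u = 0 ∧ y = 0))
    (h : ¬(-(y)^2 < 2*(u*y) ∧ u*y ≤ 0)) :
    0 < u*(y + 5*u) ∧ 2*(u*(y + 5*u)) < (y + 5*u)^2 := by
  rcases lt_or_ge 0 (u*y) with hpos | hle
  · have hu : u ≠ 0 := by rintro rfl; simp at hpos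
    have hu2 : 0 < u^2 := by positivity
    constructor
    · nlinarith
    · nlinarith [sq_nonneg y]
  · have h2 : 2*(u*y) ≤ -(y^2) := by
      by_contra hc; push_neg at hc
      exact h ⟨hc, hle⟩
    have hu : u ≠ 0 := by
      rintro rfl
      simp only [zero_mul] at h2
      have hy : y = 0 := by nlinarith [sq_nonneg y]
      exact hne ⟨rfl, hy⟩
    have hu2 : 0 < u^2 := by positivity
    have key : -(2*u^2) ≤ u*y := by
      by_contra hc; push_neg at hc
      have h3 : 0 < -(u*y) := by nlinarith
      nlinarith [mul_le_mul_of_nonneg_left h2 (sq_nonneg u),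
        mul_lt_mul_of_pos_left hc h3]
    have e1 : 0 < u*y + 3*u^2 := by nlinarith
    have e2 : 0 < u*y + 5*u^2 := by nlinarith
    constructor
    · nlinarith
    · nlinarith [mul_pos e1 e2]

private lemma sanov : Function.Injective (FreeGroup.lift pgen : FreeGroup ℕ →* SL2R) := by
  apply FreeGroup.injective_lift_of_ping_pong pgen pX pY
  · -- nonempty
    intro n
    refine ⟨⟨![(n:ℝ), 1], ?_⟩, ?_⟩
    · intro hv
      have := congrFun hv 1
      simp at this
    · constructor <;> simp [pX]
  · -- X pairwise disjoint
    intro n m hnm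
    rw [Function.onFun, Set.disjoint_left]
    rintro v ⟨h1, h2⟩ ⟨h3, h4⟩
    have hy2 : 0 < (v.1 1)^2 := by
      rcases eq_or_ne (v.1 1) 0 with hy | hy
      · rw [hy] at h1; simp at h1
      · positivity
    rcases lt_or_gt_of_ne hnm with hlt | hlt
    · have hc : (n:ℝ) + 1 ≤ (m:ℝ) := by exact_mod_cast hlt
      nlinarith [mul_nonneg (by linarith : (0:ℝ) ≤ (m:ℝ) - n - 1) (le_of_lt hy2)]
    · have hc : (m:ℝ) + 1 ≤ (n:ℝ) := by exact_mod_cast hlt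
      nlinarith [mul_nonneg (by linarith : (0:ℝ) ≤ (n:ℝ) - m - 1) (le_of_lt hy2)]
  · -- Y pairwise disjoint
    intro n m hnm
    rw [Function.onFun, Set.disjoint_left]
    rintro v ⟨h1, h2⟩ ⟨h3, h4⟩
    have hy2 : 0 < (v.1 1)^2 := by
      rcases eq_or_ne (v.1 1) 0 with hy | hy
      · rw [hy] at h1; simp at h1
      · positivity
    rcases lt_or_gt_of_ne hnm with hlt | hlt
    · have hc : (n:ℝ) + 1 ≤ (m:ℝ) := by exact_mod_cast hlt
      nlinarith [mul_nonneg (by linarith : (0:ℝ) ≤ (m:ℝ) - n - 1) (le_of_lt hy2)]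
    · have hc : (m:ℝ) + 1 ≤ (n:ℝ) := by exact_mod_cast hlt
      nlinarith [mul_nonneg (by linarith : (0:ℝ) ≤ (n:ℝ) - m - 1) (le_of_lt hy2)]
  · -- X i disjoint from Y j
    intro i j
    rw [Set.disjoint_left]
    rintro v ⟨h1, h2⟩ ⟨h3, h4⟩
    have hy2 : 0 < (v.1 1)^2 := by
      rcases eq_or_ne (v.1 1) 0 with hy | hy
      · rw [hy] at h3; simp at h3
      · positivity
    rcases le_or_gt i j with hij | hij
    · have hc : (i:ℝ) ≤ (j:ℝ) := by exact_mod_cast hij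
      nlinarith [mul_nonneg (by linarith : (0:ℝ) ≤ (j:ℝ) - i) (le_of_lt hy2)]
    · have hc : (j:ℝ) + 1 ≤ (i:ℝ) := by exact_mod_cast hij
      nlinarith [mul_nonneg (by linarith : (0:ℝ) ≤ (i:ℝ) - j - 1) (le_of_lt hy2)]
  · -- ping : pgen n • (pY n)ᶜ ⊆ pX n
    intro n w hw
    rw [Set.mem_smul_set] at hw
    obtain ⟨v, hv, rfl⟩ := hw
    have e0 : (pgen n • v).1 0 = (1 - 5*(n:ℝ)) * v.1 0 + 5*(n:ℝ)^2 * v.1 1 := by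
      rw [PV.smul_coe]
      simp [pgen, Matrix.mulVec, dotProduct, Fin.sum_univ_two]
    have e1 : (pgen n • v).1 1 = -5 * v.1 0 + (1 + 5*(n:ℝ)) * v.1 1 := by
      rw [PV.smul_coe]
      simp [pgen, Matrix.mulVec, dotProduct, Fin.sum_univ_two]
    have key := pkey1 (v.1 0 - (n:ℝ)*v.1 1) (v.1 1)
      (PV.nz v n) (by simpa [pY] using hv)
    constructor
    · show -((pgen n • v).1 1)^2 <
        2*(((pgen n • v).1 0 - (n:ℝ)*(pgen n • v).1 1)*((pgen n • v).1 1))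
      rw [e0, e1]
      nlinarith [key.1]
    · show ((pgen n • v).1 0 - (n:ℝ)*(pgen n • v).1 1)*((pgen n • v).1 1) ≤ 0
      rw [e0, e1]
      nlinarith [key.2]
  · -- ping : (pgen n)⁻¹ • (pX n)ᶜ ⊆ pY n
    intro n w hw
    rw [Pi.inv_apply, pgen_inv, Set.mem_smul_set] at hw
    obtain ⟨v, hv, rfl⟩ := hw
    have e0 : (pgen' n • v).1 0 = (1 + 5*(n:ℝ)) * v.1 0 - 5*(n:ℝ)^2 * v.1 1 := by
      rw [PV.smul_coe]
      simp [pgen', Matrix.mulVec, dotProduct, Fin.sum_univ_two]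
      ring
    have e1 : (pgen' n • v).1 1 = 5 * v.1 0 + (1 - 5*(n:ℝ)) * v.1 1 := by
      rw [PV.smul_coe]
      simp [pgen', Matrix.mulVec, dotProduct, Fin.sum_univ_two]
    have key := pkey2 (v.1 0 - (n:ℝ)*v.1 1) (v.1 1)
      (PV.nz v n) (by simpa [pX] using hv)
    constructor
    · show 0 < ((pgen' n • v).1 0 - (n:ℝ)*(pgen' n • v).1 1)*((pgen' n • v).1 1)
      rw [e0, e1]
      nlinarith [key.1]
    · show 2*(((pgen' n • v).1 0 - (n:ℝ)*(pgen' n • v).1 1)*((pgen' n • v).1 1)) <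
        ((pgen' n • v).1 1)^2
      rw [e0, e1]
      nlinarith [key.2]

/-- The free group on any countable type embeds in `SL₂(ℝ)`. -/
private lemma freeGroup_embeds_SL2 (γ : Type) [Countable γ] :
    ∃ ψ : FreeGroup γ →* SL2R, Function.Injective ψ := by
  obtain ⟨e, he⟩ := Countable.exists_injective_nat γ
  cases isEmpty_or_nonempty γ with
  | inl hemp =>
    refine ⟨1, fun x y hxy => ?_⟩
    have hall : ∀ z : FreeGroup γ, z = 1 := by
      intro z
      refine FreeGroup.induction_on z rfl (fun a => isEmptyElim a) ?_ ?_
      · intro a; exact isEmptyElim a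
      · intro a b ha hb; rw [ha, hb, one_mul]
    rw [hall x, hall y]
  | inr hne =>
    obtain ⟨r, hr⟩ := he.hasLeftInverse
    have hmapinj : Function.Injective (FreeGroup.map e : FreeGroup γ →* FreeGroup ℕ) := by
      intro x y hxy
      have h2 := congrArg (FreeGroup.map r) hxy
      rwa [FreeGroup.map.comp, FreeGroup.map.comp,
        show (r ∘ e) = id from funext fun t => hr t,
        FreeGroup.map.id, FreeGroup.map.id] at h2
    exact ⟨(FreeGroup.lift pgen).comp (FreeGroup.map e), sanov.comp hmapinj⟩

/-- For a countable group mapping to a free group injectively on `S`, there is a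
map to `SL₂(ℝ)` injective on `S`. -/
private lemma exists_hom_SL2 (L : Type) [Group L] [Countable L]
    (S : Finset L) (h : ∃ (α : Type) (f : L →* FreeGroup α), Set.InjOn f (S : Set L)) :
    ∃ g : L →* SL2R, Set.InjOn g (S : Set L) := by
  obtain ⟨α, f, hf⟩ := h
  have hsurj : Function.Surjective f.rangeRestrict := f.rangeRestrict_surjective
  have : Countable f.range := hsurj.countable
  have hofinj : Function.Injective (IsFreeGroup.of (G := f.range)) := by
    have : IsFreeGroup.of (G := f.range) =
        (IsFreeGroup.mulEquiv f.range).toFun ∘ FreeGroup.of := rfl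
    rw [this]
    exact (IsFreeGroup.mulEquiv f.range).injective.comp FreeGroup.of_injective
  have : Countable (IsFreeGroup.Generators f.range) := hofinj.countable
  obtain ⟨ψ, hψ⟩ := freeGroup_embeds_SL2 (IsFreeGroup.Generators f.range)
  refine ⟨ψ.comp ((IsFreeGroup.toFreeGroup (G := f.range)).toMonoidHom.comp f.rangeRestrict),
    ?_⟩
  intro a ha b hb hab
  apply hf ha hb
  have h1 : f.rangeRestrict a = f.rangeRestrict b := by
    apply (IsFreeGroup.toFreeGroup (G := f.range)).injective
    exact hψ hab
  exact congrArg Subtype.val h1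

private def piSL {L : Type} [Group L] {I : Type} (g : I → (L →* SL2R)) :
    L →* Matrix.SpecialLinearGroup (Fin 2) (I → ℝ) where
  toFun x := ⟨Matrix.of fun i j => fun T => ((g T x : Matrix (Fin 2) (Fin 2) ℝ) i j), by
    rw [Matrix.det_fin_two]
    funext T
    simp only [Matrix.of_apply, Pi.sub_apply, Pi.mul_apply, Pi.one_apply]
    have h := (g T x).2
    rw [Matrix.det_fin_two] at h
    exact h⟩
  map_one' := by
    apply Subtype.ext
    show Matrix.of _ = (1 : Matrix (Fin 2) (Fin 2) (I → ℝ))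
    ext i j T
    by_cases hij : i = j <;>
      simp [Matrix.one_apply, hij]
  map_mul' x y := by
    apply Subtype.ext
    show Matrix.of _ = _
    ext i j T
    erw [Matrix.SpecialLinearGroup.coe_mul]
    simp [Matrix.mul_apply, Fin.sum_univ_two]

private lemma piSL_coe {L : Type} [Group L] {I : Type} (g : I → (L →* SL2R)) (x : L)
    (i j : Fin 2) : ((piSL g x : Matrix (Fin 2) (Fin 2) (I → ℝ))) i j
      = fun T => ((g T x : Matrix (Fin 2) (Fin 2) ℝ) i j) := rfl

end SanovAux

/-- Fully residually free. -/
def FullyResiduallyFree (G : Type*) [Group G] : Prop :=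
  ∀ S : Finset G, ∃ (α : Type) (f : G →* FreeGroup α), Set.InjOn f (S : Set G)

/-- Every limit group (finitely generated fully residually free group) embeds
into `SL₂(ℝ*)` for some ultrapower `ℝ*` of the real field; in particular it
admits a faithful (hence nontrivial, when the group is nontrivial)
2-dimensional linear representation over some field. -/
theorem limitGroup_embeds_SL2_ultrapower
    (L : Type) [Group L] (hfg : Group.FG L) (hL : FullyResiduallyFree L) :
    (∃ (I : Type) (U : Ultrafilter I)
        (f : L →* Matrix.SpecialLinearGroup (Fin 2) (Filter.Germ (U : Filter I) ℝ)),
        Function.Injective f) ∧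
    (∃ (K : Type) (_ : Field K) (ρ : L →* Matrix.GeneralLinearGroup (Fin 2) K),
        Function.Injective ρ) := by
  classical
  -- L is countable
  have hcount : Countable L := by
    obtain ⟨Sg, hcl, hfin⟩ := Group.fg_iff.1 hfg
    haveI := hfin.countable.to_subtype
    haveI : Countable (FreeGroup Sg) := by
      have hmk : Function.Surjective (FreeGroup.mk : List (Sg × Bool) → FreeGroup Sg) := by
        rintro ⟨l⟩; exact ⟨l, rfl⟩
      exact hmk.countable
    have hsurj : Function.Surjective (FreeGroup.lift (Subtype.val : Sg → L)) := by
      rw [← MonoidHom.range_eq_top, FreeGroup.range_lift_eq_closure, Subtype.range_coe, hcl]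
    exact hsurj.countable
  haveI : Nonempty (Finset L) := ⟨∅⟩
  set U : Ultrafilter (Finset L) := Ultrafilter.of atTop with hUdef
  have hU : ∀ S : Finset L, {T : Finset L | S ≤ T} ∈ U :=
    fun S => Ultrafilter.of_le atTop (Filter.mem_atTop S)
  have hex : ∀ T : Finset L, ∃ gT : L →* SL2R, Set.InjOn gT (T : Set L) :=
    fun T => exists_hom_SL2 L T (hL T)
  choose g hg using hex
  set Φ : L →* Matrix.SpecialLinearGroup (Fin 2) (Filter.Germ (U : Filter (Finset L)) ℝ) :=
    (Matrix.SpecialLinearGroup.map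
      (Filter.Germ.coeRingHom (U : Filter (Finset L)))).comp (piSL g) with hΦdef
  have hΦcoe : ∀ (x : L) (i j : Fin 2),
      ((Φ x : Matrix (Fin 2) (Fin 2) (Filter.Germ (U : Filter (Finset L)) ℝ))) i j
        = ((fun T => ((g T x : Matrix (Fin 2) (Fin 2) ℝ) i j)) :
            Filter.Germ (U : Filter (Finset L)) ℝ) := by
    intro x i j
    rfl
  have hΦinj : Function.Injective Φ := by
    rw [injective_iff_map_eq_one]
    intro x hx
    have hev : ∀ i j : Fin 2, ∀ᶠ T in (U : Filter (Finset L)),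
        ((g T x : Matrix (Fin 2) (Fin 2) ℝ)) i j = (1 : Matrix (Fin 2) (Fin 2) ℝ) i j := by
      intro i j
      have h1 : ((fun T => ((g T x : Matrix (Fin 2) (Fin 2) ℝ) i j)) :
            Filter.Germ (U : Filter (Finset L)) ℝ)
          = ((fun _ : Finset L => (1 : Matrix (Fin 2) (Fin 2) ℝ) i j) :
            Filter.Germ (U : Filter (Finset L)) ℝ) := by
        rw [← hΦcoe x i j, hx]
        show ((1 : Matrix.SpecialLinearGroup (Fin 2) (Filter.Germ (U : Filter (Finset L)) ℝ)) :
          Matrix (Fin 2) (Fin 2) (Filter.Germ (U : Filter (Finset L)) ℝ)) i j = _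
        rw [Matrix.SpecialLinearGroup.coe_one]
        by_cases hij : i = j
        · simp only [Matrix.one_apply, hij, if_true]
          exact Filter.Germ.coe_one.symm
        · simp only [Matrix.one_apply, hij, if_false]
          exact Filter.Germ.coe_zero.symm
      exact Filter.Germ.coe_eq.1 h1
    have hSx : ∀ᶠ T in (U : Filter (Finset L)), ({x, 1} : Finset L) ≤ T :=
      Filter.eventually_iff.2 (hU {x, 1})
    have hcomb := ((((hev 0 0).and (hev 0 1)).and ((hev 1 0).and (hev 1 1))).and hSx)
    obtain ⟨T, ⟨⟨⟨h00, h01⟩, ⟨h10, h11⟩⟩, hT⟩⟩ := hcomb.exists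
    have hgT : g T x = 1 := by
      apply Subtype.ext
      rw [Matrix.SpecialLinearGroup.coe_one]
      ext i j
      fin_cases i <;> fin_cases j
      · simpa using h00
      · simpa using h01
      · simpa using h10
      · simpa using h11
    have hxT : x ∈ (T : Set L) := hT (Finset.mem_insert_self x {1})
    have h1T : (1 : L) ∈ (T : Set L) := hT (by simp)
    exact hg T hxT h1T (by rw [hgT, _root_.map_one])
  constructor
  · exact ⟨Finset L, U, Φ, hΦinj⟩
  · refine ⟨Filter.Germ (U : Filter (Finset L)) ℝ, inferInstance,
      (Matrix.SpecialLinearGroup.toGL).comp Φ, ?_⟩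
    have htoGL : Function.Injective
        (Matrix.SpecialLinearGroup.toGL
          (n := Fin 2) (R := Filter.Germ (U : Filter (Finset L)) ℝ)) :=
      fun A B h => Subtype.ext (congrArg Units.val h)
    exact htoGL.comp hΦinj
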